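/- Let y, x be real random variables and F a sub-σ-algebra such that E[y | F] is measurable. If E[y|X] is a measurable function of T(X) for a measurable map T, then Cov(y, E[y|X] | T(X)) = 0. Conversely, if Cov(y, E[y|X] | T(X)) = 0 almost surely, then E[y|X] is (a.s. equal to) a measurable function of T(X), i.e., E[y|X] = E[y|T(X)] almost surely. -/

import Mathlib

open MeasureTheory

lemma memL2_condexp {α : Type*} {m m0 : MeasurableSpace α} (hm : m ≤ m0)
    (μ : Measure α) [IsProbabilityMeasure μ] {f : α → ℝ} (hf : MemLp f 2 μ) :
    MemLp (μ[f|m]) 2 μ := by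
  have hfi : Integrable f μ := hf.integrable one_le_two
  have h1 : (condExpL2 ℝ ℝ hm (hf.toLp f) : α → ℝ) =ᵐ[μ] μ[f|m] := by
    refine ae_eq_condExp_of_forall_setIntegral_eq hm hfi
      (fun s hs hμs => integrableOn_condExpL2_of_measure_ne_top hm hμs.ne _)
      (fun s hs hμs => ?_) (aestronglyMeasurable_condExpL2 hm _)
    rw [integral_condExpL2_eq hm (hf.toLp f) hs hμs.ne]
    exact setIntegral_congr_ae (hm s hs) ((hf.coeFn_toLp).mono fun x hx _ => hx)
  exact (Lp.memLp _).ae_eq h1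

lemma intmul {α : Type*} {m0 : MeasurableSpace α} {μ : Measure α}
    {f g : α → ℝ} (hf : MemLp f 2 μ) (hg : MemLp g 2 μ) :
    Integrable (fun ω => f ω * g ω) μ := by
  have h : MemLp (f • g) 1 μ := hg.smul hf (r := 1)
  exact memLp_one_iff_integrable.mp h

lemma covzero_aux {α : Type*} {m1 m2 m0 : MeasurableSpace α} (hle : m1 ≤ m2) (hm2 : m2 ≤ m0)
    (μ : Measure α) [IsProbabilityMeasure μ] {y : α → ℝ} (hy : MemLp y 2 μ) :
    (μ[y|m2] =ᵐ[μ] μ[y|m1]) ↔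
      (fun ω => (μ[fun ω' => y ω' * (μ[y|m2]) ω'|m1]) ω -
          (μ[y|m1]) ω * (μ[μ[y|m2]|m1]) ω) =ᵐ[μ] (fun _ => (0 : ℝ)) := by
  have hm1 : m1 ≤ m0 := hle.trans hm2
  set g := μ[y|m2] with hgdef
  set h := μ[y|m1] with hhdef
  have hyI : Integrable y μ := hy.integrable one_le_two
  have hgL2 : MemLp g 2 μ := memL2_condexp hm2 μ hy
  have hhL2 : MemLp h 2 μ := memL2_condexp hm1 μ hy
  have tower : μ[g|m1] =ᵐ[μ] h := condExp_condExp_of_le hle hm2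
  constructor
  · intro heq
    have e1 : (fun ω' => y ω' * g ω') =ᵐ[μ] (fun ω' => h ω' * y ω') :=
      heq.mono fun ω hω => by simp only [hω, mul_comm]
    have e2 : μ[fun ω' => y ω' * g ω'|m1] =ᵐ[μ] μ[fun ω' => h ω' * y ω'|m1] :=
      condExp_congr_ae e1
    have e3 : μ[fun ω' => h ω' * y ω'|m1] =ᵐ[μ] fun ω => h ω * h ω :=
      condExp_mul_of_stronglyMeasurable_left stronglyMeasurable_condExp (intmul hhL2 hy) hyI
    filter_upwards [e2, e3, tower] with ω h2 h3 h4
    simp only [h2, h3, h4, sub_self]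
  · intro hcov
    have hgI : Integrable g μ := integrable_condExp
    have hgm1L2 : MemLp (μ[g|m1]) 2 μ := memL2_condexp hm1 μ hgL2
    -- ∫ of the covariance expression is 0
    have hint0 : ∫ ω, ((μ[fun ω' => y ω' * g ω'|m1]) ω - h ω * (μ[g|m1]) ω) ∂μ = 0 := by
      rw [integral_congr_ae hcov]; simp
    have hA : Integrable (μ[fun ω' => y ω' * g ω'|m1]) μ := integrable_condExp
    have hB : Integrable (fun ω => h ω * (μ[g|m1]) ω) μ := intmul hhL2 hgm1L2
    rw [integral_sub hA hB] at hint0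
    -- ∫ A = ∫ y g = ∫ g²
    have hAg : ∫ ω, (μ[fun ω' => y ω' * g ω'|m1]) ω ∂μ = ∫ ω, g ω * g ω ∂μ := by
      rw [integral_condExp hm1]
      have comm : ∫ ω, y ω * g ω ∂μ = ∫ ω, g ω * y ω ∂μ := by
        apply integral_congr_ae; filter_upwards with ω using mul_comm _ _
      rw [comm, ← integral_condExp hm2 (f := fun ω' => g ω' * y ω')]
      apply integral_congr_ae
      exact condExp_mul_of_stronglyMeasurable_left stronglyMeasurable_condExp (intmul hgL2 hy) hyI
    -- ∫ B = ∫ h²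
    have hBh : ∫ ω, h ω * (μ[g|m1]) ω ∂μ = ∫ ω, h ω * h ω ∂μ := by
      apply integral_congr_ae; filter_upwards [tower] with ω hω; rw [hω]
    -- ∫ h g = ∫ h²
    have hhg : ∫ ω, h ω * g ω ∂μ = ∫ ω, h ω * h ω ∂μ := by
      rw [← integral_condExp hm1 (f := fun ω' => h ω' * g ω')]
      have hpull : μ[fun ω' => h ω' * g ω'|m1] =ᵐ[μ] fun ω => h ω * (μ[g|m1]) ω :=
        condExp_mul_of_stronglyMeasurable_left stronglyMeasurable_condExp (intmul hhL2 hgL2) hgI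
      rw [integral_congr_ae hpull, hBh]
    have key : ∫ ω, g ω * g ω ∂μ = ∫ ω, h ω * h ω ∂μ := by
      rw [← hAg, ← hBh]; linarith [hint0]
    -- ∫ (g - h)² = 0
    have hsq : ∫ ω, (g ω - h ω) ^ 2 ∂μ = 0 := by
      have expand : (fun ω => (g ω - h ω) ^ 2) =
          fun ω => (g ω * g ω - (2 : ℝ) * (h ω * g ω)) + h ω * h ω := funext fun ω => by ring
      have i1 : Integrable (fun ω => g ω * g ω - (2 : ℝ) * (h ω * g ω)) μ :=
        (intmul hgL2 hgL2).sub ((intmul hhL2 hgL2).const_mul 2)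
      rw [expand, integral_add i1 (intmul hhL2 hhL2),
        integral_sub (intmul hgL2 hgL2) ((intmul hhL2 hgL2).const_mul 2),
        integral_const_mul, hhg, key]
      ring
    have hsqI : Integrable (fun ω => (g ω - h ω) ^ 2) μ := ((hgL2.sub hhL2).integrable_sq)
    have := (integral_eq_zero_iff_of_nonneg (fun ω => sq_nonneg _) hsqI).mp hsq
    filter_upwards [this] with ω hω
    have : (g ω - h ω) ^ 2 = 0 := hω
    have := pow_eq_zero_iff (two_ne_zero) |>.mp this
    linarith [this]

/-- `E[y|X]` is (a.s.) a measurable function of `T(X)` — i.e. it coincides a.s.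
with `E[y|T(X)]` — if and only if `Cov(y, E[y|X] | T(X)) = 0` almost surely. -/
theorem stmt16 {Ω E F : Type*} [MeasurableSpace E] [MeasurableSpace F]
    {m0 : MeasurableSpace Ω} (μ : Measure Ω) [IsProbabilityMeasure μ]
    (y : Ω → ℝ) (X : Ω → E) (T : E → F) (hX : Measurable X) (hT : Measurable T)
    (hy : MemLp y 2 μ) :
    (μ[y | MeasurableSpace.comap X inferInstance] =ᵐ[μ]
        μ[y | MeasurableSpace.comap (T ∘ X) inferInstance]) ↔
      (fun ω =>
          (μ[fun ω' => y ω' * (μ[y | MeasurableSpace.comap X inferInstance]) ω' |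
              MeasurableSpace.comap (T ∘ X) inferInstance]) ω -
            (μ[y | MeasurableSpace.comap (T ∘ X) inferInstance]) ω *
              (μ[μ[y | MeasurableSpace.comap X inferInstance] |
                MeasurableSpace.comap (T ∘ X) inferInstance]) ω) =ᵐ[μ]
        (fun _ => (0 : ℝ)) := by
  have hle : MeasurableSpace.comap (T ∘ X) inferInstance ≤
      MeasurableSpace.comap X inferInstance := by
    rw [← MeasurableSpace.comap_comp]
    exact MeasurableSpace.comap_mono hT.comap_le
  exact covzero_aux hle hX.comap_le μ hy
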